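/- Let (M, ρ) be a metric space, N ⊆ M a dense subset containing the base point, 0 < p ≤ 1, and m an element of the linear span of {δ(x) : x ∈ N} inside F_p(M). Then ‖m‖_{F_p(M)} = inf (∑_{i=1}^n |a_i|^p)^{1/p}, where the infimum runs over all finite representations m = ∑_{i=1}^n a_i μ_i with μ_i elementary molecules of N (i.e., μ_i = (δ(x)-δ(y))/ρ(x,y) with x ≠ y both in N). -/

import Mathlib

open Classical in
/-- The set of values (∑ |aᵢ|^p)^{1/p} over all decompositions of m into elementary
molecules with endpoints in S. Here an element of the span of the δ's is modelled
as a (finitely supported) function m : M → ℝ with total mass zero, δ(x) being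
χ_x - χ_basepoint, and the molecule (δ(x)-δ(y))/ρ(x,y) being (χ_x - χ_y)/ρ(x,y). -/
noncomputable def molDecompSet (p : ℝ) {M : Type*} [MetricSpace M] (S : Set M)
    (m : M → ℝ) : Set ℝ :=
  {c | ∃ (n : ℕ) (a : Fin n → ℝ) (x y : Fin n → M),
    (∀ i, x i ∈ S ∧ y i ∈ S ∧ x i ≠ y i) ∧
    m = (∑ i, a i • fun w =>
      ((if w = x i then (1 : ℝ) else 0) - (if w = y i then 1 else 0)) / dist (x i) (y i)) ∧
    c = (∑ i, |a i| ^ p) ^ (1 / p)}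

section Helpers
open Classical

lemma pick_near {M : Type*} [MetricSpace M] {N : Set M} (hdense : Dense N)
    {z : M} (hz : z ∉ N) (B : Finset M) {δ : ℝ} (hδ : 0 < δ) :
    ∃ w ∈ N, w ∉ B ∧ dist z w < δ := by
  classical
  obtain ⟨r, hr0, hrδ, hrb⟩ :
      ∃ r > 0, r ≤ δ ∧ ∀ b ∈ B.erase z, r ≤ dist z b := by
    by_cases hB' : (B.erase z).Nonempty
    · refine ⟨min δ ((B.erase z).inf' hB' (dist z)), ?_, min_le_left _ _, ?_⟩
      · refine lt_min hδ ?_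
        rw [Finset.lt_inf'_iff]
        intro b hb
        exact dist_pos.mpr (Ne.symm (Finset.mem_erase.mp hb).1)
      · intro b hb
        exact le_trans (min_le_right _ _) (Finset.inf'_le _ hb)
    · exact ⟨δ, hδ, le_refl _, fun b hb => absurd ⟨b, hb⟩ hB'⟩
  obtain ⟨w, hwb, hwN⟩ := Metric.dense_iff.mp hdense z r hr0
  refine ⟨w, hwN, ?_, lt_of_lt_of_le (by simpa [dist_comm] using Metric.mem_ball.mp hwb) hrδ⟩
  intro hwB
  have hwz : w ≠ z := fun h => hz (h ▸ hwN)
  have := hrb w (Finset.mem_erase.mpr ⟨hwz, hwB⟩)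
  have h2 : dist z w < r := by simpa [dist_comm] using Metric.mem_ball.mp hwb
  linarith

lemma perturb {M : Type*} [MetricSpace M] {N : Set M} (hdense : Dense N)
    (F : Finset M) (hF : ∀ z ∈ F, z ∉ N) :
    ∀ (A : Finset M) {δ : ℝ}, 0 < δ →
    ∃ g : M → M, (∀ z ∉ F, g z = z) ∧
      (∀ z ∈ F, g z ∈ N ∧ g z ∉ A ∪ F ∧ dist z (g z) < δ) ∧
      Set.InjOn g ↑F := by
  classical
  induction F using Finset.induction_on with
  | empty =>
    intro A δ hδ
    exact ⟨id, fun _ _ => rfl, fun z hz => absurd hz (Finset.notMem_empty z),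
      by simp [Set.InjOn]⟩
  | @insert z F' hzF' ih =>
    intro A δ hδ
    have hF' : ∀ u ∈ F', u ∉ N := fun u hu => hF u (Finset.mem_insert_of_mem hu)
    obtain ⟨g', hg'1, hg'2, hg'3⟩ := ih hF' (insert z A) hδ
    obtain ⟨w, hwN, hwB, hwd⟩ := pick_near hdense (hF z (Finset.mem_insert_self z F'))
      (A ∪ insert z F' ∪ F'.image g') hδ
    refine ⟨Function.update g' z w, ?_, ?_, ?_⟩
    · intro u hu
      have huz : u ≠ z := fun h => hu (h ▸ Finset.mem_insert_self z F')
      rw [Function.update_of_ne huz]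
      exact hg'1 u (fun h => hu (Finset.mem_insert_of_mem h))
    · intro u hu
      rcases Finset.mem_insert.mp hu with h | h
      · subst h
        rw [Function.update_self]
        refine ⟨hwN, ?_, hwd⟩
        intro hmem
        exact hwB (Finset.mem_union_left _ hmem)
      · have huz : u ≠ z := fun hh => hzF' (hh ▸ h)
        rw [Function.update_of_ne huz]
        obtain ⟨h1, h2, h3⟩ := hg'2 u h
        refine ⟨h1, ?_, h3⟩
        intro hmem
        apply h2
        rcases Finset.mem_union.mp hmem with hh | hh
        · exact Finset.mem_union_left _ (Finset.mem_insert_of_mem hh)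
        · rcases Finset.mem_insert.mp hh with hh | hh
          · exact Finset.mem_union_left _ (hh ▸ Finset.mem_insert_self z A)
          · exact Finset.mem_union_right _ hh
    · intro u hu v hv huv
      simp only [Finset.coe_insert, Set.mem_insert_iff, Finset.mem_coe] at hu hv
      rcases hu with hu | hu <;> rcases hv with hv | hv
      · exact hu.trans hv.symm
      · exfalso
        have hvz : v ≠ z := fun hh => hzF' (hh ▸ hv)
        rw [hu, Function.update_self, Function.update_of_ne hvz] at huv
        exact hwB (by rw [huv]; exact Finset.mem_union_right _ (Finset.mem_image_of_mem g' hv))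
      · exfalso
        have huz : u ≠ z := fun hh => hzF' (hh ▸ hu)
        rw [hv, Function.update_self, Function.update_of_ne huz] at huv
        exact hwB (by rw [← huv]; exact Finset.mem_union_right _ (Finset.mem_image_of_mem g' hu))
      · have huz : u ≠ z := fun hh => hzF' (hh ▸ hu)
        have hvz : v ≠ z := fun hh => hzF' (hh ▸ hv)
        rw [Function.update_of_ne huz, Function.update_of_ne hvz] at huv
        exact hg'3 hu hv huv

lemma mol_nonneg {p : ℝ} {M : Type*} [MetricSpace M] {S : Set M} {m : M → ℝ}
    {c : ℝ} (hc : c ∈ molDecompSet p S m) : 0 ≤ c := by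
  obtain ⟨n, a, x, y, _, _, rfl⟩ := hc
  exact Real.rpow_nonneg (Finset.sum_nonneg fun i _ => Real.rpow_nonneg (abs_nonneg _) p) _


lemma nonempty_mol {M : Type*} [MetricSpace M] (base : M) (N : Set M)
    (hbase : base ∈ N) (p : ℝ)
    (m : M → ℝ) (s : Finset M) (hs : ↑s ⊆ N)
    (hsupp : ∀ x ∉ s, m x = 0) (hsum : ∑ x ∈ s, m x = 0) :
    (molDecompSet p N m).Nonempty := by
  classical
  set t := s.erase base with ht
  set e := t.equivFin with he
  refine ⟨_, t.card, fun i => m (e.symm i : M) * dist (e.symm i : M) base,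
    fun i => (e.symm i : M), fun _ => base, ?_, ?_, rfl⟩
  · intro i
    have hmem := (e.symm i).2
    exact ⟨hs (Finset.mem_of_mem_erase hmem), hbase, (Finset.mem_erase.mp hmem).1⟩
  · funext w
    rw [Finset.sum_apply]
    have key : ∀ i : Fin t.card,
        ((fun i => m (e.symm i : M) * dist (e.symm i : M) base) i •
          fun w' => ((if w' = (e.symm i : M) then (1:ℝ) else 0) -
            (if w' = base then 1 else 0)) / dist (e.symm i : M) base) w
        = m (e.symm i : M) * ((if w = (e.symm i : M) then (1:ℝ) else 0) -
            (if w = base then 1 else 0)) := by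
      intro i
      have hne : (e.symm i : M) ≠ base := (Finset.mem_erase.mp (e.symm i).2).1
      have hd : dist (e.symm i : M) base ≠ 0 := dist_ne_zero.mpr hne
      simp only [Pi.smul_apply, smul_eq_mul]
      field_simp
    rw [Finset.sum_congr rfl (fun i _ => key i)]
    have : ∑ i : Fin t.card, m (e.symm i : M) *
        ((if w = (e.symm i : M) then (1:ℝ) else 0) - (if w = base then 1 else 0))
        = ∑ z ∈ t, m z * ((if w = z then (1:ℝ) else 0) - (if w = base then 1 else 0)) := by
      rw [← Finset.sum_coe_sort t (fun z => m z * ((if w = z then (1:ℝ) else 0) - (if w = base then 1 else 0)))]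
      exact Fintype.sum_equiv e.symm _ _ (fun i => rfl)
    rw [this]
    by_cases hw : w = base
    · have h2 : ∑ z ∈ t, m z * ((if w = z then (1:ℝ) else 0) - (if w = base then 1 else 0))
          = ∑ z ∈ t, (- m z) := by
        refine Finset.sum_congr rfl fun z hz => ?_
        have hzb : base ≠ z := fun h => (Finset.mem_erase.mp hz).1 h.symm
        simp [hw, hzb]
      rw [h2, Finset.sum_neg_distrib]
      by_cases hbs : base ∈ s
      · rw [ht, Finset.sum_erase_eq_sub hbs, hsum, hw]
        ring
      · rw [ht, Finset.erase_eq_of_notMem hbs, hsum, hw, hsupp base hbs]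
        ring
    · have h2 : ∑ z ∈ t, m z * ((if w = z then (1:ℝ) else 0) - (if w = base then 1 else 0))
          = ∑ z ∈ t, m z * (if w = z then (1:ℝ) else 0) := by
        refine Finset.sum_congr rfl fun z hz => by simp [hw]
      rw [h2]
      by_cases hwt : w ∈ t
      · rw [Finset.sum_eq_single w]
        · simp
        · intro z hz hzw
          have : w ≠ z := fun h => hzw h.symm
          simp [this]
        · exact fun h => absurd hwt h
      · rw [Finset.sum_eq_zero, hsupp w]
        · intro hws
          exact hwt (Finset.mem_erase.mpr ⟨hw, hws⟩)
        · intro z hz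
          have : w ≠ z := fun h => hwt (h ▸ hz)
          simp [this]

lemma approx_mol {M : Type*} [MetricSpace M] {N : Set M} (hdense : Dense N)
    {p : ℝ} (hp0 : 0 < p)
    {m : M → ℝ} {s : Finset M} (hs : ↑s ⊆ N)
    (hsupp : ∀ x ∉ s, m x = 0)
    {c : ℝ} (hc : c ∈ molDecompSet p Set.univ m) {ε : ℝ} (hε : 0 < ε) :
    ∃ c' ∈ molDecompSet p N m, c' ≤ (1 + ε) * c := by
  classical
  obtain ⟨n, a, x, y, hxy, hm, rfl⟩ := hc
  have hcnn : (0:ℝ) ≤ (∑ i, |a i| ^ p) ^ (1 / p) :=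
    Real.rpow_nonneg (Finset.sum_nonneg fun i _ => Real.rpow_nonneg (abs_nonneg _) p) _
  rcases Nat.eq_zero_or_pos n with hn | hn
  · subst hn
    refine ⟨_, ⟨0, a, x, y, fun i => i.elim0, hm, rfl⟩, ?_⟩
    nlinarith
  haveI : Nonempty (Fin n) := ⟨⟨0, hn⟩⟩
  -- minimal distance
  have hd : ∀ i, 0 < dist (x i) (y i) := fun i => dist_pos.mpr (hxy i).2.2
  set dmin := Finset.univ.inf' Finset.univ_nonempty (fun i => dist (x i) (y i)) with hdmin
  have hdmin0 : 0 < dmin := by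
    rw [hdmin, Finset.lt_inf'_iff]
    exact fun i _ => hd i
  have hdminle : ∀ i, dmin ≤ dist (x i) (y i) :=
    fun i => Finset.inf'_le _ (Finset.mem_univ i)
  set δ := ε * dmin / 2 with hδdef
  have hδ : 0 < δ := by positivity
  set T : Finset M := s ∪ Finset.image x Finset.univ ∪ Finset.image y Finset.univ with hT
  have xT : ∀ i, x i ∈ T := fun i => by
    simp [hT, Finset.mem_union]
  have yT : ∀ i, y i ∈ T := fun i => by
    simp [hT, Finset.mem_union]
  have sT : ∀ w ∈ s, w ∈ T := fun w hw => by
    simp [hT, Finset.mem_union, hw]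
  set F := T.filter (fun z => z ∉ N) with hF
  obtain ⟨g, hg1, hg2, hg3⟩ := perturb hdense F
    (fun z hz => (Finset.mem_filter.mp hz).2) T hδ
  -- facts about g
  have hnotF : ∀ z ∈ T, z ∉ F → g z = z ∧ z ∈ N := by
    intro z hzT hzF
    refine ⟨hg1 z hzF, ?_⟩
    by_contra hzN
    exact hzF (Finset.mem_filter.mpr ⟨hzT, hzN⟩)
  have hgN : ∀ z ∈ T, g z ∈ N := by
    intro z hzT
    by_cases hzF : z ∈ F
    · exact (hg2 z hzF).1
    · obtain ⟨h1, h2⟩ := hnotF z hzT hzF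
      rw [h1]; exact h2
  have hgd : ∀ z, dist z (g z) < δ := by
    intro z
    by_cases hzF : z ∈ F
    · exact (hg2 z hzF).2.2
    · rw [hg1 z hzF, dist_self]; exact hδ
  have hginj : ∀ u ∈ T, ∀ v ∈ T, g u = g v → u = v := by
    intro u hu v hv huv
    by_cases huF : u ∈ F <;> by_cases hvF : v ∈ F
    · exact hg3 huF hvF huv
    · exfalso
      have := (hg2 u huF).2.1
      rw [huv, (hnotF v hv hvF).1] at this
      exact this (Finset.mem_union_left _ hv)
    · exfalso
      have := (hg2 v hvF).2.1
      rw [← huv, (hnotF u hu huF).1] at this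
      exact this (Finset.mem_union_left _ hu)
    · rw [← (hnotF u hu huF).1, ← (hnotF v hv hvF).1]; exact huv
  have hgs_id : ∀ w ∈ s, g w = w := by
    intro w hw
    refine hg1 w ?_
    intro hwF
    exact (Finset.mem_filter.mp hwF).2 (hs hw)
  have hgns : ∀ z ∈ T, z ∉ s → g z ∉ s := by
    intro z hzT hzs hgzs
    by_cases hzF : z ∈ F
    · exact (hg2 z hzF).2.1 (Finset.mem_union_left _ (sT _ hgzs))
    · rw [(hnotF z hzT hzF).1] at hgzs
      exact hzs hgzs
  -- distances of images
  have hgxy : ∀ i, g (x i) ≠ g (y i) :=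
    fun i h => (hxy i).2.2 (hginj _ (xT i) _ (yT i) h)
  have hd' : ∀ i, 0 < dist (g (x i)) (g (y i)) := fun i => dist_pos.mpr (hgxy i)
  have hdist : ∀ i, dist (g (x i)) (g (y i)) ≤ (1 + ε) * dist (x i) (y i) := by
    intro i
    have h1 := dist_triangle4 (g (x i)) (x i) (y i) (g (y i))
    have h2 : dist (g (x i)) (x i) < δ := by rw [dist_comm]; exact hgd (x i)
    have h3 : dist (y i) (g (y i)) < δ := hgd (y i)
    have h4 : 2 * δ ≤ ε * dist (x i) (y i) := by
      rw [hδdef]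
      have := hdminle i
      nlinarith
    nlinarith
  -- new decomposition
  set a' : Fin n → ℝ := fun i => a i * (dist (g (x i)) (g (y i)) / dist (x i) (y i))
    with ha'
  have hmw : ∀ w, m w = ∑ i, a i *
      (((if w = x i then (1:ℝ) else 0) - (if w = y i then 1 else 0)) / dist (x i) (y i)) := by
    intro w
    rw [hm, Finset.sum_apply]
    simp [Pi.smul_apply, smul_eq_mul]
  refine ⟨(∑ i, |a' i| ^ p) ^ (1 / p),
    ⟨n, a', fun i => g (x i), fun i => g (y i),
      fun i => ⟨hgN _ (xT i), hgN _ (yT i), hgxy i⟩, ?_, rfl⟩, ?_⟩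
  · funext w
    rw [Finset.sum_apply]
    have key : ∀ i : Fin n, (a' i • fun w' =>
        ((if w' = g (x i) then (1:ℝ) else 0) - (if w' = g (y i) then 1 else 0)) /
          dist (g (x i)) (g (y i))) w
        = a i * (((if w = g (x i) then (1:ℝ) else 0) - (if w = g (y i) then 1 else 0)) /
          dist (x i) (y i)) := by
      intro i
      simp only [Pi.smul_apply, smul_eq_mul, ha']
      have h1 : dist (g (x i)) (g (y i)) ≠ 0 := (hd' i).ne'
      have h2 : dist (x i) (y i) ≠ 0 := (hd i).ne'
      field_simp
    rw [Finset.sum_congr rfl (fun i _ => key i)]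
    by_cases hw : ∃ z ∈ T, g z = w
    · obtain ⟨z, hzT, hzw⟩ := hw
      have hind : ∀ u ∈ T, ((w = g u) ↔ (z = u)) := by
        intro u hu
        constructor
        · intro h
          exact hginj z hzT u hu (hzw.trans h)
        · intro h
          rw [← h, hzw]
      have hsum : ∑ i, a i * (((if w = g (x i) then (1:ℝ) else 0) -
          (if w = g (y i) then 1 else 0)) / dist (x i) (y i)) = m z := by
        rw [hmw z]
        refine Finset.sum_congr rfl fun i _ => ?_
        rw [if_congr (hind (x i) (xT i)) rfl rfl, if_congr (hind (y i) (yT i)) rfl rfl]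
      rw [hsum]
      by_cases hzs : z ∈ s
      · rw [← hzw, hgs_id z hzs]
      · rw [hsupp z hzs, hsupp w (by rw [← hzw]; exact hgns z hzT hzs)]
    · push_neg at hw
      have hzero : ∀ i, a i * (((if w = g (x i) then (1:ℝ) else 0) -
          (if w = g (y i) then 1 else 0)) / dist (x i) (y i)) = 0 := by
        intro i
        have h1 : w ≠ g (x i) := fun h => (hw (x i) (xT i)) h.symm
        have h2 : w ≠ g (y i) := fun h => (hw (y i) (yT i)) h.symm
        simp [h1, h2]
      rw [Finset.sum_eq_zero fun i _ => hzero i]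
      have hws : w ∉ s := by
        intro hws
        exact hw w (sT w hws) (hgs_id w hws)
      rw [hsupp w hws]
  · -- norm bound
    have habs : ∀ i, |a' i| ≤ (1 + ε) * |a i| := by
      intro i
      rw [ha']
      simp only []
      rw [abs_mul, abs_of_nonneg (by positivity : (0:ℝ) ≤ dist (g (x i)) (g (y i)) / dist (x i) (y i))]
      rw [mul_comm (1 + ε) |a i|]
      apply mul_le_mul_of_nonneg_left _ (abs_nonneg _)
      rw [div_le_iff₀ (hd i)]
      exact hdist i
    have hpow : ∀ i, |a' i| ^ p ≤ (1 + ε) ^ p * |a i| ^ p := by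
      intro i
      calc |a' i| ^ p ≤ ((1 + ε) * |a i|) ^ p :=
            Real.rpow_le_rpow (abs_nonneg _) (habs i) hp0.le
        _ = (1 + ε) ^ p * |a i| ^ p := Real.mul_rpow (by positivity) (abs_nonneg _)
    have hsum : ∑ i, |a' i| ^ p ≤ (1 + ε) ^ p * ∑ i, |a i| ^ p := by
      rw [Finset.mul_sum]
      exact Finset.sum_le_sum fun i _ => hpow i
    calc (∑ i, |a' i| ^ p) ^ (1 / p)
        ≤ ((1 + ε) ^ p * ∑ i, |a i| ^ p) ^ (1 / p) :=
          Real.rpow_le_rpow (Finset.sum_nonneg fun i _ => Real.rpow_nonneg (abs_nonneg _) p)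
            hsum (by positivity)
      _ = ((1 + ε) ^ p) ^ (1 / p) * (∑ i, |a i| ^ p) ^ (1 / p) :=
          Real.mul_rpow (Real.rpow_nonneg (by positivity) _)
            (Finset.sum_nonneg fun i _ => Real.rpow_nonneg (abs_nonneg _) p)
      _ = (1 + ε) * (∑ i, |a i| ^ p) ^ (1 / p) := by
          rw [← Real.rpow_mul (by positivity : (0:ℝ) ≤ 1 + ε),
            mul_one_div_cancel hp0.ne', Real.rpow_one]

end Helpers

/-- Molecules over a dense subset N containing the basepoint already compute the
free p-norm of any element of the span of {δ(x) : x ∈ N}. -/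
theorem stmt17 {M : Type*} [MetricSpace M] (base : M) (N : Set M)
    (hdense : Dense N) (hbase : base ∈ N)
    (p : ℝ) (hp0 : 0 < p) (hp1 : p ≤ 1)
    (m : M → ℝ) (s : Finset M) (hs : ↑s ⊆ N)
    (hsupp : ∀ x ∉ s, m x = 0) (hsum : ∑ x ∈ s, m x = 0) :
    sInf (molDecompSet p Set.univ m) = sInf (molDecompSet p N m) := by
  classical
  have hne : (molDecompSet p N m).Nonempty := nonempty_mol base N hbase p m s hs hsupp hsum
  have hsub : molDecompSet p N m ⊆ molDecompSet p Set.univ m := by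
    rintro c ⟨n, a, x, y, h1, h2, h3⟩
    exact ⟨n, a, x, y, fun i => ⟨Set.mem_univ _, Set.mem_univ _, (h1 i).2.2⟩, h2, h3⟩
  have hneU : (molDecompSet p Set.univ m).Nonempty := hne.mono hsub
  have hbdd : BddBelow (molDecompSet p Set.univ m) := ⟨0, fun c hc => mol_nonneg hc⟩
  have hbddN : BddBelow (molDecompSet p N m) := ⟨0, fun c hc => mol_nonneg hc⟩
  apply le_antisymm
  · exact csInf_le_csInf hbdd hne hsub
  · apply le_csInf hneU
    intro c hc
    have hc0 : 0 ≤ c := mol_nonneg hc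
    apply le_of_forall_pos_le_add
    intro η hη
    have hε : 0 < η / (c + 1) := by positivity
    obtain ⟨c', hc', hle⟩ := approx_mol hdense hp0 hs hsupp hc hε
    have h1 := csInf_le hbddN hc'
    have h2 : η / (c + 1) * c ≤ η := by
      rw [div_mul_eq_mul_div, div_le_iff₀ (by positivity)]
      nlinarith
    nlinarith
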